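/- Let A be a real symmetric positive semidefinite n×n matrix with all entries nonnegative and rank A = 2. Then there exists an n×2 matrix B with all entries nonnegative such that A = B·Bᵀ. In particular, every doubly nonnegative matrix of rank 2 is completely positive with cp-rank at most 2. -/

import Mathlib

open Matrix

lemma psd_rank_two_factor (n : ℕ) (A : Matrix (Fin n) (Fin n) ℝ)
    (hA : A.PosSemidef) (hrank : A.rank = 2) :
    ∃ C : Matrix (Fin n) (Fin 2) ℝ, A = C * Cᵀ := by
  classical
  have hH := hA.1
  set μ := hH.eigenvalues with hμ
  have hμ0 : ∀ i, 0 ≤ μ i := hA.eigenvalues_nonneg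
  have hcard : Fintype.card {i // μ i ≠ 0} = 2 := by
    rw [← hH.rank_eq_card_non_zero_eigs, hrank]
  let e : Fin 2 ≃ {i // μ i ≠ 0} := Fintype.equivOfCardEq (by simp [hcard])
  set U : Matrix (Fin n) (Fin n) ℝ := (hH.eigenvectorUnitary : Matrix (Fin n) (Fin n) ℝ) with hU
  have hAij : ∀ i j, A i j = ∑ l, U i l * μ l * U j l := by
    intro i j
    nth_rewrite 1 [hH.spectral_theorem]
    rw [Unitary.conjStarAlgAut_apply, Matrix.mul_apply]
    refine Finset.sum_congr rfl fun l _ => ?_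
    rw [Matrix.mul_diagonal, Matrix.star_apply]
    simp only [Function.comp_apply, RCLike.ofReal_real_eq_id, id_eq, star_trivial, hU]
    try ring
  refine ⟨Matrix.of fun i k => U i (e k) * Real.sqrt (μ (e k)), ?_⟩
  ext i j
  rw [hAij i j, Matrix.mul_apply]
  have h1 : ∀ k : Fin 2, (Matrix.of fun i k => U i (e k) * Real.sqrt (μ (e k))) i k *
      (Matrix.of fun i k => U i (e k) * Real.sqrt (μ (e k)))ᵀ k j
      = U i (e k) * μ (e k) * U j (e k) := by
    intro k
    simp only [Matrix.of_apply, Matrix.transpose_apply]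
    rw [show U i (e k) * Real.sqrt (μ (e k)) * (U j (e k) * Real.sqrt (μ (e k)))
      = U i (e k) * (Real.sqrt (μ (e k)) * Real.sqrt (μ (e k))) * U j (e k) by ring,
      Real.mul_self_sqrt (hμ0 _)]
    try ring
  rw [Finset.sum_congr rfl fun k _ => h1 k]
  have h2 : ∑ k : Fin 2, U i (e k) * μ (e k) * U j (e k)
      = ∑ s : {l // μ l ≠ 0}, U i s * μ s * U j s :=
    Fintype.sum_equiv e _ _ (fun _ => rfl)
  rw [h2]
  have h3 : ∑ s : {l // μ l ≠ 0}, U i s * μ s * U j s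
      = ∑ l ∈ Finset.univ.filter (fun l => μ l ≠ 0), U i l * μ l * U j l := by
    rw [← Finset.sum_subtype (Finset.univ.filter (fun l => μ l ≠ 0)) (by simp)
      (fun l => U i l * μ l * U j l)]
  rw [h3, Finset.sum_filter_of_ne]
  intro l _ h
  contrapose! h
  simp [h]

lemma exists_rel_min {α : Type*} [DecidableEq α] (r : α → α → Prop) (s : Finset α) :
    (∀ a ∈ s, ∀ b ∈ s, r a b ∨ r b a) →
    (∀ a ∈ s, ∀ b ∈ s, ∀ c ∈ s, r a b → r b c → r a c) →
    s.Nonempty → ∃ a ∈ s, ∀ b ∈ s, r a b := by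
  induction s using Finset.induction_on with
  | empty => intro _ _ h; simp at h
  | @insert a s ha ih =>
    intro htot htrans _
    by_cases hs : s.Nonempty
    · obtain ⟨m, hm, hmin⟩ := ih
        (fun x hx y hy => htot x (by simp [hx]) y (by simp [hy]))
        (fun x hx y hy z hz => htrans x (by simp [hx]) y (by simp [hy]) z (by simp [hz])) hs
      rcases htot m (by simp [hm]) a (by simp) with h | h
      · refine ⟨m, by simp [hm], fun b hb => ?_⟩
        rcases Finset.mem_insert.1 hb with rfl | hb
        · exact h
        · exact hmin b hb
      · refine ⟨a, by simp, fun b hb => ?_⟩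
        rcases Finset.mem_insert.1 hb with rfl | hb
        · rcases htot b (by simp) b (by simp) with h' | h' <;> exact h'
        · exact htrans a (by simp) m (by simp [hm]) b (by simp [hb]) h (hmin b hb)
    · refine ⟨a, by simp, fun b hb => ?_⟩
      rcases Finset.mem_insert.1 hb with rfl | hb
      · rcases htot b (by simp) b (by simp) with h' | h' <;> exact h'
      · exact absurd ⟨b, hb⟩ hs

theorem rank_two_doubly_nonnegative_is_completely_positive
    (n : ℕ) (A : Matrix (Fin n) (Fin n) ℝ)
    (hA : A.PosSemidef) (hnonneg : ∀ i j, 0 ≤ A i j) (hrank : A.rank = 2) :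
    ∃ B : Matrix (Fin n) (Fin 2) ℝ, (∀ i j, 0 ≤ B i j) ∧ A = B * Bᵀ := by
  classical
  obtain ⟨C, hC⟩ := psd_rank_two_factor n A hA hrank
  -- pairwise nonnegative inner products of rows of C
  have hAC : ∀ i j, A i j = C i 0 * C j 0 + C i 1 * C j 1 := by
    intro i j
    rw [hC, Matrix.mul_apply, Fin.sum_univ_two]
    simp [Matrix.transpose_apply]
  have hdot : ∀ i j, 0 ≤ C i 0 * C j 0 + C i 1 * C j 1 := by
    intro i j; rw [← hAC]; exact hnonneg i j
  -- set of nonzero rows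
  set S : Finset (Fin n) := Finset.univ.filter (fun i => C i 0 ≠ 0 ∨ C i 1 ≠ 0) with hS
  have hSne : S.Nonempty := by
    by_contra h
    have hz : ∀ i, C i 0 = 0 ∧ C i 1 = 0 := by
      intro i
      by_contra hi
      exact h ⟨i, by
        simp only [hS, Finset.mem_filter, Finset.mem_univ, true_and]
        exact not_and_or.mp hi⟩
    have hA0 : A = 0 := by
      ext i j
      rw [hAC, (hz i).1, (hz i).2, Matrix.zero_apply]; ring
    rw [hA0] at hrank
    simp [Matrix.rank_zero] at hrank
  -- extreme nonzero row via the det-relation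
  obtain ⟨i0, hi0S, hmin⟩ := exists_rel_min
    (fun i j => 0 ≤ C i 0 * C j 1 - C i 1 * C j 0) S
    (fun a _ b _ => by
      rcases le_total 0 (C a 0 * C b 1 - C a 1 * C b 0) with h | h
      · exact Or.inl h
      · exact Or.inr (by linarith))
    (fun a haS b hbS c _ hab hbc => by
      have hb : C b 0 ≠ 0 ∨ C b 1 ≠ 0 := by
        simpa [hS, Finset.mem_filter] using hbS
      have hbpos : 0 < C b 0 ^ 2 + C b 1 ^ 2 := by
        rcases hb with h | h <;> positivity
      have h1 := hdot a b
      have h2 := hdot b c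
      nlinarith [mul_nonneg hab h2, mul_nonneg h1 hbc])
    hSne
  set w0 : ℝ := C i0 0 with hw0
  set w1 : ℝ := C i0 1 with hw1
  have hwne : w0 ≠ 0 ∨ w1 ≠ 0 := by simpa [hS, Finset.mem_filter, hw0, hw1] using hi0S
  set r : ℝ := Real.sqrt (w0 ^ 2 + w1 ^ 2) with hr
  have hrpos : 0 < r := by
    apply Real.sqrt_pos.2
    rcases hwne with h | h <;> positivity
  have hr2 : r ^ 2 = w0 ^ 2 + w1 ^ 2 := Real.sq_sqrt (by positivity)
  set R : Matrix (Fin 2) (Fin 2) ℝ := Matrix.of ![![w0 / r, -w1 / r], ![w1 / r, w0 / r]] with hR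
  have hRRT : R * Rᵀ = 1 := by
    have hrne : r ≠ 0 := ne_of_gt hrpos
    ext i j
    rw [Matrix.mul_apply, Fin.sum_univ_two]
    fin_cases i <;> fin_cases j <;>
      · simp [hR, Matrix.one_apply, Matrix.transpose_apply]
        field_simp
        nlinarith [hr2]
  refine ⟨C * R, ?_, ?_⟩
  · intro i k
    rw [Matrix.mul_apply, Fin.sum_univ_two]
    fin_cases k
    · show 0 ≤ C i 0 * R 0 0 + C i 1 * R 1 0
      have hent0 : R 0 0 = w0 / r := by simp [hR]
      have hent1 : R 1 0 = w1 / r := by simp [hR]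
      rw [hent0, hent1,
        show C i 0 * (w0 / r) + C i 1 * (w1 / r) = (C i 0 * w0 + C i 1 * w1) / r by ring]
      exact div_nonneg (by linarith [hdot i i0]) hrpos.le
    · show 0 ≤ C i 0 * R 0 1 + C i 1 * R 1 1
      have hent0 : R 0 1 = -w1 / r := by simp [hR]
      have hent1 : R 1 1 = w0 / r := by simp [hR]
      rw [hent0, hent1,
        show C i 0 * (-w1 / r) + C i 1 * (w0 / r) = (w0 * C i 1 - w1 * C i 0) / r by ring]
      apply div_nonneg _ hrpos.le
      by_cases hi : C i 0 ≠ 0 ∨ C i 1 ≠ 0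
      · have := hmin i (by
          simp only [hS, Finset.mem_filter, Finset.mem_univ, true_and]
          exact hi)
        linarith
      · push_neg at hi
        rw [hi.1, hi.2]; simp
  · rw [Matrix.transpose_mul, ← Matrix.mul_assoc, Matrix.mul_assoc C R Rᵀ, hRRT,
      Matrix.mul_one, hC]
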